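/- Let f : ℝ^n → ℝ be a convex function and suppose there exists M ≥ 0 such that |f(z)| ≤ M(1 + ‖z‖) for all z ∈ ℝ^n. Then f is globally Lipschitz continuous with Lipschitz constant at most M, i.e., |f(x) − f(y)| ≤ M‖x − y‖ for all x, y ∈ ℝ^n. -/

import Mathlib

/-- A convex function on ℝ^n with linear growth |f(z)| ≤ M(1 + ‖z‖) is
globally Lipschitz with constant at most M. -/
theorem convex_linear_growth_lipschitz
    {n : ℕ} (f : EuclideanSpace ℝ (Fin n) → ℝ) (M : ℝ) (hM : 0 ≤ M)
    (hconv : ConvexOn ℝ Set.univ f)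
    (hgrowth : ∀ z, |f z| ≤ M * (1 + ‖z‖)) :
    ∀ x y : EuclideanSpace ℝ (Fin n), |f x - f y| ≤ M * ‖x - y‖ := by
  have key : ∀ x y : EuclideanSpace ℝ (Fin n), f x - f y ≤ M * ‖x - y‖ := by
    intro x y
    rcases eq_or_ne x y with rfl | hne
    · simp
    set d := ‖x - y‖ with hd
    have hd0 : 0 < d := by
      simpa [hd] using norm_sub_pos_iff.mpr hne
    refine le_of_forall_pos_le_add ?_
    intro ε hε
    set C := M * (2 + ‖x‖ + ‖y‖) with hC
    set t := d * (|C - M * d| + 1) / ε with ht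
    have ht0 : 0 < t := by positivity
    have htd : (0:ℝ) < t + d := by positivity
    set z := x + (t / d) • (x - y) with hz
    have ha : (0:ℝ) ≤ t / (t + d) := by positivity
    have hb : (0:ℝ) ≤ d / (t + d) := by positivity
    have hab : t / (t + d) + d / (t + d) = 1 := by field_simp
    have hx : (t / (t + d)) • y + (d / (t + d)) • z = x := by
      rw [hz]
      match_scalars <;> field_simp <;> ring
    have hcv := hconv.2 (Set.mem_univ y) (Set.mem_univ z) ha hb hab
    rw [hx] at hcv
    have hznorm : ‖z‖ ≤ ‖x‖ + t := by
      calc ‖z‖ ≤ ‖x‖ + ‖(t / d) • (x - y)‖ := norm_add_le _ _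
        _ = ‖x‖ + t := by
            rw [norm_smul, Real.norm_eq_abs, abs_of_pos (by positivity)]
            field_simp
            rw [← hd]; ring
    have hfz : f z ≤ M * (1 + ‖x‖ + t) := by
      have := (abs_le.mp (hgrowth z)).2
      nlinarith
    have hfy : -f y ≤ M * (1 + ‖y‖) := by
      have := (abs_le.mp (hgrowth y)).1
      linarith
    -- f x - f y ≤ (d/(t+d)) * (f z - f y) ≤ (d/(t+d)) * (C + M*t)
    have h1 : f x - f y ≤ (d / (t + d)) * (C + M * t) := by
      have hfzy : f z - f y ≤ C + M * t := by
        rw [hC]; nlinarith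
      have hcv' : f x ≤ (t / (t + d)) * f y + (d / (t + d)) * f z := by
        simpa [smul_eq_mul] using hcv
      have e : t / (t + d) * f y + d / (t + d) * f z - f y
          = d / (t + d) * (f z - f y) := by
        have h1b : t / (t + d) = 1 - d / (t + d) := by linarith
        rw [h1b]; ring
      linarith [mul_le_mul_of_nonneg_left hfzy hb]
    have h2 : (d / (t + d)) * (C + M * t) ≤ M * d + ε := by
      rw [div_mul_eq_mul_div, div_le_iff₀ htd]
      have hεt : ε * t = d * (|C - M * d| + 1) := by
        rw [ht]; field_simp
      nlinarith [le_abs_self (C - M * d), abs_nonneg (C - M * d), hε.le, hd0.le]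
    linarith
  intro x y
  rw [abs_sub_le_iff]
  exact ⟨key x y, by simpa [norm_sub_rev] using key y x⟩
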